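/- Let G be a finite simple graph with n vertices such that the chromatic number satisfies χ(G) ≤ ⌊n/2⌋, and let H = H(G) be the graph obtained from G by one step of the half-model. Then χ(H) = χ(G) + 1. -/

import Mathlib

open SimpleGraph

/-- The set of "clones": one new vertex for each subset of `V` of size `⌊|V|/2⌋`. -/
abbrev halfClones (V : Type) [Fintype V] [DecidableEq V] : Type :=
  {S : Finset V // S.card = Fintype.card V / 2}

/-- One step of the half-model: old vertices keep their adjacencies; the clone `v_S`
is adjacent exactly to the members of `S`; clones form an independent set. -/
def halfStep {V : Type} [Fintype V] [DecidableEq V] (G : SimpleGraph V) :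
    SimpleGraph (V ⊕ halfClones V) where
  Adj x y :=
    match x, y with
    | Sum.inl u, Sum.inl v => G.Adj u v
    | Sum.inl u, Sum.inr S => u ∈ S.1
    | Sum.inr S, Sum.inl u => u ∈ S.1
    | Sum.inr _, Sum.inr _ => False
  symm := by
    refine ⟨?_⟩
    rintro (u | S) (v | T) h
    · exact G.adj_symm h
    · exact h
    · exact h
    · exact h.elim
  loopless := by
    refine ⟨?_⟩
    rintro (u | S) h
    · exact G.irrefl h
    · exact h.elim

instance halfStep.instDecidableRelAdj {V : Type} [Fintype V] [DecidableEq V]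
    (G : SimpleGraph V) [DecidableRel G.Adj] : DecidableRel (halfStep G).Adj
  | Sum.inl u, Sum.inl v => inferInstanceAs (Decidable (G.Adj u v))
  | Sum.inl u, Sum.inr S => inferInstanceAs (Decidable (u ∈ S.1))
  | Sum.inr S, Sum.inl u => inferInstanceAs (Decidable (u ∈ S.1))
  | Sum.inr _, Sum.inr _ => inferInstanceAs (Decidable False)

/-- if `χ(G) ≤ ⌊n/2⌋`, then `χ(H(G)) = χ(G) + 1`. -/
theorem stmt_15 {V : Type} [Fintype V] [DecidableEq V] (G : SimpleGraph V)
    (h : G.chromaticNumber ≤ (Fintype.card V / 2 : ℕ)) :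
    (halfStep G).chromaticNumber = G.chromaticNumber + 1 := by
  have hne : G.chromaticNumber ≠ ⊤ := (lt_of_le_of_lt h (WithTop.coe_lt_top _)).ne
  set k : ℕ := ENat.toNat G.chromaticNumber with hkdef
  have hGk : G.chromaticNumber = (k : ℕ∞) := (ENat.coe_toNat hne).symm
  have hcol : G.Colorable k := by
    rw [← chromaticNumber_le_iff_colorable, hGk]
  have hk_le : k ≤ Fintype.card V / 2 := by
    rwa [hGk, Nat.cast_le] at h
  rw [hGk]
  -- upper bound
  obtain ⟨c⟩ := hcol
  have hupper : (halfStep G).Colorable (k + 1) := by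
    refine ⟨SimpleGraph.Coloring.mk
      (fun x => match x with
        | Sum.inl v => (c v).castSucc
        | Sum.inr _ => Fin.last k) ?_⟩
    rintro (u | S) (v | T) hadj <;> simp only []
    · exact fun he => c.valid hadj (Fin.castSucc_injective _ he)
    · exact fun he => (Fin.castSucc_lt_last (c u)).ne he
    · exact fun he => (Fin.castSucc_lt_last (c v)).ne' he
    · exact hadj.elim
  -- lower bound: H is not k-colorable
  have hlower : ¬ (halfStep G).Colorable k := by
    rintro ⟨c'⟩
    -- restriction to old vertices
    let d : G.Coloring (Fin k) := SimpleGraph.Coloring.mk (fun v => c' (Sum.inl v))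
      (fun {u v} hadj => c'.valid (show (halfStep G).Adj (Sum.inl u) (Sum.inl v) from hadj))
    -- d is surjective
    have hsurj : Function.Surjective d := by
      by_contra hns
      simp only [Function.Surjective, not_forall] at hns
      obtain ⟨i, hi⟩ := hns
      simp only [not_exists] at hi
      -- recolor into the subtype of used colors
      let T : Finset (Fin k) := Finset.univ.image d
      have hiT : i ∉ T := by
        simp only [T, Finset.mem_image]
        rintro ⟨v, -, hv⟩
        exact hi v hv
      have hTcard : T.card < k := by
        have hTss : T ⊂ Finset.univ := Finset.ssubset_univ_iff.mpr
          (fun hTu => hiT (by rw [hTu]; exact Finset.mem_univ i))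
        simpa using Finset.card_lt_card hTss
      have hcolT : G.Colorable T.card := by
        have : G.Colorable (Fintype.card {x // x ∈ T}) := by
          refine SimpleGraph.Coloring.colorable (SimpleGraph.Coloring.mk
            (fun v => ⟨d v, Finset.mem_image_of_mem d (Finset.mem_univ v)⟩) ?_)
          intro u v hadj he
          exact d.valid hadj (congrArg Subtype.val he)
        simpa [Fintype.card_coe] using this
      have := hcolT.chromaticNumber_le
      rw [hGk, Nat.cast_le] at this
      omega
    obtain ⟨f, hf⟩ := hsurj.hasRightInverse
    have hfinj : Function.Injective f := Function.LeftInverse.injective hf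
    let R : Finset V := Finset.univ.image f
    have hRcard : R.card = k := by
      rw [Finset.card_image_of_injective _ hfinj, Finset.card_univ, Fintype.card_fin]
    obtain ⟨S, hRS, -, hScard⟩ := Finset.exists_subsuperset_card_eq
      (Finset.subset_univ R) (hRcard ▸ hk_le) (by simpa using Nat.div_le_self (Fintype.card V) 2)
    set clone : halfClones V := ⟨S, hScard⟩
    set i : Fin k := c' (Sum.inr clone)
    have hmem : f i ∈ S := hRS (Finset.mem_image_of_mem f (Finset.mem_univ i))
    have hadj : (halfStep G).Adj (Sum.inl (f i)) (Sum.inr clone) := hmem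
    exact c'.valid hadj (by rw [show c' (Sum.inl (f i)) = d (f i) from rfl, hf i])
  -- conclude
  refine le_antisymm ?_ ?_
  · have := hupper.chromaticNumber_le
    rwa [Nat.cast_add, Nat.cast_one] at this
  · have : ¬ (halfStep G).chromaticNumber ≤ (k : ℕ∞) := fun hle =>
      hlower (chromaticNumber_le_iff_colorable.mp hle)
    have hlt : (k : ℕ∞) < (halfStep G).chromaticNumber := lt_of_not_ge this
    exact Order.add_one_le_of_lt hlt
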